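/- arXiv:math/0302043 — 2 statements merged into one kernel-verified Lean document; each statement's English description precedes it below -/
import Mathlib

section
/- Let $m\ge 1$ and suppose for each nonempty $T\subseteq\{1,\dots,n\}$ the contrast $\alpha_T = (h_T-l_T)/m$, where $0\le l_T\le h_T\le m$ are integers satisfying for every $S\subsetneq\{1,\dots,n\}$ the inequality $\sum_{S\subseteq T,\ |T|\equiv|S|\bmod 2} h_T \le \sum_{S\subseteq T,\ |T|\not\equiv|S|\bmod 2} l_T$ (with $h_\emptyset=l_\emptyset=0$) and $h_{\{1,\dots,n\}}\le m$. Then $\sum_{\emptyset\neq T\subseteq\{1,\dots,n\}} 2^{|T|-1}\alpha_T \le 1$. -/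
open Finset

lemma parity_count {α : Type*} [DecidableEq α] (T : Finset α) (hT : T.Nonempty) (b : ℕ) :
    ((T.powerset.filter fun S => S.card % 2 = b % 2).card = 2 ^ (T.card - 1)) := by
  set E := T.powerset.filter fun S => S.card % 2 = 0 with hE
  set O := T.powerset.filter fun S => ¬ S.card % 2 = 0 with hO
  have hadd : E.card + O.card = 2 ^ T.card := by
    rw [hE, hO, card_filter_add_card_filter_not, card_powerset]
  have hsign : (E.card : ℤ) - O.card = 0 := by
    have H := sum_powerset_neg_one_pow_card_of_nonempty hT
    rw [← sum_filter_add_sum_filter_not T.powerset (fun S => S.card % 2 = 0)] at H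
    have h1 : ∑ S ∈ E, (-1:ℤ)^S.card = E.card := by
      rw [Finset.sum_congr rfl fun S hS => Even.neg_one_pow (Nat.even_iff.2 (mem_filter.mp hS).2)]
      simp
      rfl
    have h2 : ∑ S ∈ O, (-1:ℤ)^S.card = -O.card := by
      rw [Finset.sum_congr rfl fun S hS => Odd.neg_one_pow (Nat.odd_iff.2 (by have := (mem_filter.mp hS).2; omega))]
      simp
    rw [← H, h1, h2]
    ring
  have hcard : 1 ≤ T.card := card_pos.mpr hT
  have hEO : E.card = O.card := by omega
  have hpow : 2 ^ T.card = 2 * 2 ^ (T.card - 1) := by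
    rw [← pow_succ']
    congr 1
    omega
  rcases Nat.mod_two_eq_zero_or_one b with hb | hb <;> rw [hb]
  · rw [show (filter (fun S => #S % 2 = 0) T.powerset) = E from rfl]; omega
  · have : (filter (fun S => #S % 2 = 1) T.powerset) = O := by
      rw [hO]; apply filter_congr; intro S _; constructor <;> intro <;> omega
    rw [this]; omega

/-- Contrast trade-off: `∑_{∅≠T} 2^{|T|-1} α_T ≤ 1`, where
`α_T = (h_T - l_T)/m`. -/
theorem contrast_tradeoff (n : ℕ) (hn : 1 ≤ n) (m : ℕ) (hm : 1 ≤ m)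
    (h l : Finset (Fin n) → ℤ)
    (h0 : h ∅ = 0) (l0 : l ∅ = 0)
    (hl0 : ∀ T : Finset (Fin n), 0 ≤ l T)
    (hlh : ∀ T : Finset (Fin n), l T ≤ h T)
    (hhm : ∀ T : Finset (Fin n), h T ≤ (m : ℤ))
    (hineq : ∀ S : Finset (Fin n), S ⊂ univ →
      ∑ T ∈ univ.filter (fun T : Finset (Fin n) =>
          S ⊆ T ∧ T.card % 2 = S.card % 2), h T ≤
      ∑ T ∈ univ.filter (fun T : Finset (Fin n) =>
          S ⊆ T ∧ T.card % 2 ≠ S.card % 2), l T)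
    (α : Finset (Fin n) → ℚ)
    (hα : ∀ T : Finset (Fin n), T.Nonempty → α T = ((h T : ℚ) - (l T : ℚ)) / m) :
    ∑ T ∈ univ.filter (fun T : Finset (Fin n) => T.Nonempty),
      2 ^ (T.card - 1) * α T ≤ 1 := by
  classical
  set 𝒮 : Finset (Finset (Fin n)) := univ.filter (fun S : Finset (Fin n) => S ⊂ univ) with h𝒮
  -- the summed inequality
  have main : ∑ S ∈ 𝒮, (∑ T ∈ univ.filter (fun T : Finset (Fin n) =>
          S ⊆ T ∧ T.card % 2 = S.card % 2), h T)
      ≤ ∑ S ∈ 𝒮, (∑ T ∈ univ.filter (fun T : Finset (Fin n) =>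
          S ⊆ T ∧ T.card % 2 ≠ S.card % 2), l T) :=
    sum_le_sum fun S hS => hineq S ((mem_filter.mp hS).2)
  -- swap the sums
  have swapEq : ∑ S ∈ 𝒮, (∑ T ∈ univ.filter (fun T : Finset (Fin n) =>
          S ⊆ T ∧ T.card % 2 = S.card % 2), h T)
      = ∑ T : Finset (Fin n),
          ((𝒮.filter fun S => S ⊆ T ∧ T.card % 2 = S.card % 2).card : ℤ) * h T := by
    simp_rw [sum_filter]
    rw [Finset.sum_comm]
    refine sum_congr rfl fun T _ => ?_
    rw [← sum_filter, sum_const, nsmul_eq_mul]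
  have swapNe : ∑ S ∈ 𝒮, (∑ T ∈ univ.filter (fun T : Finset (Fin n) =>
          S ⊆ T ∧ T.card % 2 ≠ S.card % 2), l T)
      = ∑ T : Finset (Fin n),
          ((𝒮.filter fun S => S ⊆ T ∧ T.card % 2 ≠ S.card % 2).card : ℤ) * l T := by
    simp_rw [sum_filter]
    rw [Finset.sum_comm]
    refine sum_congr rfl fun T _ => ?_
    rw [← sum_filter, sum_const, nsmul_eq_mul]
  rw [swapEq, swapNe] at main
  -- identify the coefficient sets
  have setEq : ∀ T : Finset (Fin n),
      (𝒮.filter fun S => S ⊆ T ∧ T.card % 2 = S.card % 2)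
        = (T.powerset.filter fun S => S.card % 2 = T.card % 2).erase univ := by
    intro T
    ext S
    simp only [h𝒮, mem_filter, mem_erase, mem_powerset, mem_univ, true_and,
      ssubset_univ_iff]
    tauto
  have setNe : ∀ T : Finset (Fin n),
      (𝒮.filter fun S => S ⊆ T ∧ T.card % 2 ≠ S.card % 2)
        = (T.powerset.filter fun S => S.card % 2 = (T.card + 1) % 2) := by
    intro T
    ext S
    simp only [h𝒮, mem_filter, mem_powerset, mem_univ, true_and, ssubset_univ_iff]
    constructor
    · rintro ⟨_, hST, hpar⟩
      exact ⟨hST, by omega⟩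
    · rintro ⟨hST, hpar⟩
      refine ⟨?_, hST, by omega⟩
      rintro rfl
      have : T = univ := univ_subset_iff.mp hST
      subst this
      omega
  -- compute the coefficients on nonempty T
  have cNe : ∀ T : Finset (Fin n), T.Nonempty →
      ((𝒮.filter fun S => S ⊆ T ∧ T.card % 2 ≠ S.card % 2).card : ℤ) = 2 ^ (T.card - 1) := by
    intro T hT
    rw [setNe, parity_count T hT]
    push_cast
    ring
  have cEq : ∀ T : Finset (Fin n), T.Nonempty →
      ((𝒮.filter fun S => S ⊆ T ∧ T.card % 2 = S.card % 2).card : ℤ)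
        = 2 ^ (T.card - 1) - (if T = univ then 1 else 0) := by
    intro T hT
    rw [setEq]
    by_cases hTu : T = univ
    · subst hTu
      have hmem : (univ : Finset (Fin n)) ∈
          ((univ : Finset (Fin n)).powerset.filter fun S => S.card % 2 = (univ : Finset (Fin n)).card % 2) := by
        simp
      rw [card_erase_of_mem hmem, if_pos rfl]
      have hc := parity_count (univ : Finset (Fin n)) hT (univ : Finset (Fin n)).card
      rw [hc]
      have : 1 ≤ 2 ^ ((univ : Finset (Fin n)).card - 1) := Nat.one_le_two_pow
      push_cast [Nat.cast_sub this]
      ring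
    · have hmem : (univ : Finset (Fin n)) ∉
          (T.powerset.filter fun S => S.card % 2 = T.card % 2) := by
        simp only [mem_filter, mem_powerset]
        rintro ⟨hsub, -⟩
        exact hTu (univ_subset_iff.mp hsub)
      rw [erase_eq_of_notMem hmem, parity_count T hT, if_neg hTu]
      push_cast
      ring
  -- reduce sums over univ to sums over nonempty sets
  have splitEq : ∀ g : Finset (Fin n) → ℤ, g ∅ = 0 →
      ∀ c : Finset (Fin n) → ℤ,
      ∑ T : Finset (Fin n), c T * g T
        = ∑ T ∈ univ.filter (fun T : Finset (Fin n) => T.Nonempty), c T * g T := by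
    intro g hg c
    rw [← sum_filter_add_sum_filter_not univ (fun T : Finset (Fin n) => T.Nonempty)]
    have : ∑ T ∈ univ.filter (fun T : Finset (Fin n) => ¬ T.Nonempty), c T * g T = 0 := by
      refine sum_eq_zero fun T hT => ?_
      have : T = ∅ := not_nonempty_iff_eq_empty.mp (mem_filter.mp hT).2
      rw [this, hg, mul_zero]
    rw [this, add_zero]
  rw [splitEq h h0 _, splitEq l l0 _] at main
  set NE : Finset (Finset (Fin n)) := univ.filter (fun T : Finset (Fin n) => T.Nonempty) with hNE
  -- rewrite coefficients
  have e1 : ∑ T ∈ NE, ((𝒮.filter fun S => S ⊆ T ∧ T.card % 2 = S.card % 2).card : ℤ) * h T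
      = ∑ T ∈ NE, ((2:ℤ) ^ (T.card - 1) - (if T = univ then 1 else 0)) * h T :=
    sum_congr rfl fun T hT => by rw [cEq T (mem_filter.mp hT).2]
  have e2 : ∑ T ∈ NE, ((𝒮.filter fun S => S ⊆ T ∧ T.card % 2 ≠ S.card % 2).card : ℤ) * l T
      = ∑ T ∈ NE, (2:ℤ) ^ (T.card - 1) * l T :=
    sum_congr rfl fun T hT => by rw [cNe T (mem_filter.mp hT).2]
  rw [e1, e2] at main
  simp_rw [sub_mul] at main
  rw [sum_sub_distrib] at main
  have huniv_mem : (univ : Finset (Fin n)) ∈ NE := by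
    rw [hNE]
    simp only [mem_filter, mem_univ, true_and]
    rw [univ_nonempty_iff]
    exact Fin.pos_iff_nonempty.mp (by omega)
  have e3 : ∑ T ∈ NE, (if T = univ then (1:ℤ) else 0) * h T = h univ := by
    rw [Finset.sum_eq_single (univ : Finset (Fin n))]
    · simp
    · intro T _ hT; rw [if_neg hT, zero_mul]
    · intro hc; exact absurd huniv_mem hc
  rw [e3] at main
  -- key integer inequality
  have key : ∑ T ∈ NE, (2:ℤ) ^ (T.card - 1) * (h T - l T) ≤ (m : ℤ) := by
    have : ∑ T ∈ NE, (2:ℤ) ^ (T.card - 1) * (h T - l T)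
        = ∑ T ∈ NE, (2:ℤ) ^ (T.card - 1) * h T - ∑ T ∈ NE, (2:ℤ) ^ (T.card - 1) * l T := by
      rw [← sum_sub_distrib]; exact sum_congr rfl fun T _ => by ring
    rw [this]
    have := hhm univ
    omega
  -- pass to rationals
  have hmQ : (0:ℚ) < (m : ℚ) := by exact_mod_cast hm
  have goal_eq : ∑ T ∈ NE, (2:ℚ) ^ (T.card - 1) * α T
      = ((∑ T ∈ NE, (2:ℤ) ^ (T.card - 1) * (h T - l T) : ℤ) : ℚ) / m := by
    push_cast
    rw [sum_div]
    refine sum_congr rfl fun T hT => ?_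
    rw [hα T (mem_filter.mp hT).2]
    ring
  rw [hNE] at goal_eq
  rw [goal_eq]
  rw [div_le_one hmQ]
  exact_mod_cast key
end

section
/- Let $n\ge 2$ be even and let $\overline{h}_T,\overline{l}_T$ (nonempty $T\subseteq\{1,\dots,n\}$, $\overline{l}_T=\overline{h}_T-1$ for $T\neq\{1,\dots,n\}$, $\overline{l}_{\{1,\dots,n\}}=\overline{h}_{\{1,\dots,n\}}$) be as in the shifted Droste values. Define $r_T=\overline{h}_T$ for $|T|$ even, $r_T=\overline{l}_T$ for $|T|$ odd, $T\neq\{1,\dots,n\}$, and $r_{\{1,\dots,n\}}=\overline{h}_{\{1,\dots,n\}}-1$ if $n$ is even (else as given). Then the explicit solution $x_S=\sum_{\{1,\dots,n\}\setminus S\subseteq T} (-1)^{|T|+|S|+n+1} r_T$ satisfies $x_{\{1,\dots,n\}}=0$, $x_S=1$ for $|S|$ even with $S\neq\{1,\dots,n\}$, and $x_S\ge 0$ for $|S|$ odd. -/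
open Finset

lemma neg_one_pow_congr_mod {a b : ℕ} (h : a % 2 = b % 2) : ((-1:ℤ))^a = (-1)^b := by
  rw [neg_one_pow_eq_pow_mod_two, h, ← neg_one_pow_eq_pow_mod_two]

def Gv (m : ℕ) : ℤ := if m = 0 then 0 else 3^m - 2^m - 1

lemma sum_superset_reindex {n : ℕ} (A : Finset (Fin n)) (F : Finset (Fin n) → ℤ) :
    ∑ T ∈ univ.filter (fun T => A ⊆ T), F T = ∑ U ∈ Aᶜ.powerset, F (A ∪ U) := by
  refine Finset.sum_nbij' (i := fun T => T \ A) (j := fun U => A ∪ U) ?_ ?_ ?_ ?_ ?_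
  · intro T hT
    simp only [mem_filter, mem_univ, true_and] at hT
    rw [mem_powerset, compl_eq_univ_sdiff]
    exact sdiff_subset_sdiff (subset_univ T) le_rfl
  · intro U hU
    simp only [mem_filter, mem_univ, true_and]
    exact subset_union_left
  · intro T hT
    simp only [mem_filter, mem_univ, true_and] at hT
    exact union_sdiff_of_subset hT
  · intro U hU
    rw [mem_powerset] at hU
    refine union_sdiff_cancel_left ?_
    exact disjoint_compl_right.mono_right hU
  · intro T hT
    simp only [mem_filter, mem_univ, true_and] at hT
    rw [union_sdiff_of_subset hT]

lemma sum_pow_two_card {n : ℕ} (V : Finset (Fin n)) :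
    ∑ U ∈ V.powerset, (2:ℤ)^U.card = 3^V.card := by
  rw [Finset.sum_powerset_apply_card (fun k => (2:ℤ)^k)]
  have h := add_pow (2:ℤ) 1 V.card
  simp only [one_pow, mul_one] at h
  norm_num at h
  rw [h]
  refine Finset.sum_congr rfl fun k _ => ?_
  rw [nsmul_eq_mul]; ring

lemma main_sum (n s : ℕ) (hs : 1 ≤ s) :
    ∑ k ∈ range (s+1), (s.choose k : ℤ) • ((-1:ℤ)^(k+1) * (Gv n - 3 - Gv (s-k) + (-1)^(s+k)))
    = 2^s - 1 + (-1)^s - (-1)^s * 2^s := by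
  have key : ∀ k ∈ range (s+1),
      (s.choose k : ℤ) • ((-1:ℤ)^(k+1) * (Gv n - 3 - Gv (s-k) + (-1)^(s+k)))
      = (Gv n - 3) * (-((-1:ℤ)^k * s.choose k))
        + ((-1:ℤ)^k * 3^(s-k) * s.choose k)
        - ((-1:ℤ)^k * 2^(s-k) * s.choose k)
        - ((-1:ℤ)^k * s.choose k)
        + (if k = s then (-1:ℤ)^k * s.choose k else 0)
        - ((-1:ℤ)^s * s.choose k) := by
    intro k hk
    rw [mem_range] at hk
    have hG : Gv (s-k) = 3^(s-k) - 2^(s-k) - 1 + (if k = s then 1 else 0) := by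
      by_cases h : k = s
      · subst h; simp [Gv]
      · rw [if_neg h, Gv, if_neg (by omega)]; ring
    have hsq : ((-1:ℤ))^k * (-1)^k = 1 := by
      rw [← pow_add]; rw [neg_one_pow_congr_mod (a := k+k) (b := 0) (by omega)]; norm_num
    rw [smul_eq_mul, hG, pow_succ, pow_add]
    by_cases h : k = s
    · subst h; rw [if_pos rfl, if_pos rfl]
      linear_combination (-((-1:ℤ)^k * (k.choose k : ℤ))) * hsq
    · rw [if_neg h, if_neg h]
      linear_combination (-((-1:ℤ)^s * (s.choose k : ℤ))) * hsq
  rw [Finset.sum_congr rfl key]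
  have e1 : ∑ k ∈ range (s+1), ((-1:ℤ)^k * (s.choose k : ℤ)) = 0 :=
    Int.alternating_sum_range_choose_of_ne (by omega)
  have e2 : ∑ k ∈ range (s+1), ((-1:ℤ)^k * 3^(s-k) * (s.choose k : ℤ)) = 2^s := by
    have h := add_pow (-1 : ℤ) 3 s
    norm_num at h
    rw [← h]
  have e3 : ∑ k ∈ range (s+1), ((-1:ℤ)^k * 2^(s-k) * (s.choose k : ℤ)) = 1 := by
    have h := add_pow (-1 : ℤ) 2 s
    norm_num at h
    rw [← h]
  have e4 : ∑ k ∈ range (s+1), (if k = s then (-1:ℤ)^k * (s.choose k : ℤ) else 0)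
      = (-1)^s := by
    rw [Finset.sum_ite_eq' (range (s+1)) s]
    simp [Nat.choose_self]
  have e5 : ∑ k ∈ range (s+1), ((s.choose k : ℤ)) = 2^s := by
    rw [← Nat.cast_sum, Nat.sum_range_choose]
    push_cast; ring
  simp only [Finset.sum_sub_distrib, Finset.sum_add_distrib, Finset.sum_neg_distrib,
    ← Finset.mul_sum]
  rw [e1, e2, e3, e4, e5]
  ring

/-- For even `n`, after adjusting `r_{{1,…,n}}` to `h̄_{{1,…,n}} - 1`, the
explicit solution of `M x = r` satisfies `x_{{1,…,n}} = 0`, `x_S = 1` for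
`|S|` even (`S ≠ {1,…,n}`), and `x_S ≥ 0` for `|S|` odd. -/
theorem adjusted_solution_nonneg (n : ℕ) (hn : 2 ≤ n) (hev : Even n)
    (δ h hb lb r x : Finset (Fin n) → ℤ)
    (hδ1 : ∀ T : Finset (Fin n), T.Nonempty → T ≠ univ → δ T = 1)
    (hδ2 : δ univ = 0)
    (hh : ∀ T : Finset (Fin n), T.Nonempty →
      h T = (∑ T' ∈ univ.filter (fun T' : Finset (Fin n) => T'.Nonempty),
              δ T' * 2 ^ (T'.card - 1)) -
            ∑ T' ∈ univ.filter (fun T' : Finset (Fin n) => T ⊂ T'),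
              δ T' * 2 ^ (T'.card - 1 - T.card))
    (hhb : ∀ T : Finset (Fin n), T.Nonempty → hb T = h T - 1)
    (hlb : ∀ T : Finset (Fin n), T.Nonempty → lb T = h T - δ T - 1)
    (hb0 : hb ∅ = 0) (lb0 : lb ∅ = 0)
    (hr : ∀ T : Finset (Fin n), T ≠ univ →
      r T = if Even T.card then hb T else lb T)
    (hruniv : r univ = hb univ - 1)
    (hx : ∀ S : Finset (Fin n),
      x S = ∑ T ∈ univ.filter (fun T : Finset (Fin n) => univ \ S ⊆ T),
        (-1 : ℤ) ^ (T.card + S.card + n + 1) * r T) :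
    x univ = 0 ∧
    (∀ S : Finset (Fin n), S.Nonempty → S ≠ univ → Even S.card → x S = 1) ∧
    (∀ S : Finset (Fin n), S.Nonempty → ¬ Even S.card → 0 ≤ x S) := by
  have hn2 : n % 2 = 0 := Nat.even_iff.mp hev
  have huniv_ne : (univ : Finset (Fin n)).Nonempty := ⟨⟨0, by omega⟩, mem_univ _⟩
  have hcard_univ : (univ : Finset (Fin n)).card = n := by simp
  -- Step 1: the "A" sum
  have hA : (2:ℤ) * ∑ T' ∈ univ.filter (fun T' : Finset (Fin n) => T'.Nonempty),
      δ T' * 2 ^ (T'.card - 1) = Gv n := by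
    rw [Finset.mul_sum]
    have step1 : ∀ T' ∈ univ.filter (fun T' : Finset (Fin n) => T'.Nonempty),
        2 * (δ T' * 2 ^ (T'.card - 1))
        = 2 ^ T'.card - (if T' = univ then (2:ℤ)^T'.card else 0) := by
      intro T' hT'
      rw [mem_filter] at hT'
      have h1 : 1 ≤ T'.card := hT'.2.card_pos
      have h2 : (2:ℤ) * 2 ^ (T'.card - 1) = 2 ^ T'.card := by
        rw [← pow_succ']
        congr 1; omega
      by_cases hc : T' = univ
      · rw [if_pos hc, hc, hδ2]; ring
      · rw [if_neg hc, hδ1 T' hT'.2 hc, ← h2]; ring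
    rw [Finset.sum_congr rfl step1, Finset.sum_sub_distrib]
    have s1 : ∑ T' ∈ univ.filter (fun T' : Finset (Fin n) => T'.Nonempty),
        (2:ℤ)^T'.card = 3^n - 1 := by
      have hsplit := Finset.sum_filter_add_sum_filter_not (univ : Finset (Finset (Fin n)))
        (fun T' => T'.Nonempty) (fun T' => (2:ℤ)^T'.card)
      have hall : ∑ T' ∈ (univ : Finset (Finset (Fin n))), (2:ℤ)^T'.card = 3^n := by
        rw [← Finset.powerset_univ, sum_pow_two_card, hcard_univ]
      have hne : ∑ T' ∈ univ.filter (fun T' : Finset (Fin n) => ¬ T'.Nonempty),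
          (2:ℤ)^T'.card = 1 := by
        have he : univ.filter (fun T' : Finset (Fin n) => ¬ T'.Nonempty) = {∅} := by
          ext T; simp [Finset.not_nonempty_iff_eq_empty]
        rw [he, Finset.sum_singleton]; simp
      rw [hne] at hsplit
      linarith [hsplit, hall]
    have s2 : ∑ T' ∈ univ.filter (fun T' : Finset (Fin n) => T'.Nonempty),
        (if T' = univ then (2:ℤ)^T'.card else 0) = 2^n := by
      rw [Finset.sum_ite_eq' _ univ (fun T' => (2:ℤ)^T'.card),
        if_pos (by rw [mem_filter]; exact ⟨mem_univ _, huniv_ne⟩), hcard_univ]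
    rw [s1, s2, Gv, if_neg (by omega)]
    ring
  -- Step 2: the "B" sum
  have hB : ∀ T : Finset (Fin n), T.Nonempty →
      (2:ℤ) * ∑ T' ∈ univ.filter (fun T' : Finset (Fin n) => T ⊂ T'),
        δ T' * 2 ^ (T'.card - 1 - T.card) = Gv (n - T.card) := by
    intro T hT
    have hfe : univ.filter (fun T' : Finset (Fin n) => T ⊂ T')
        = (univ.filter (fun T' : Finset (Fin n) => T ⊆ T')).erase T := by
      ext T'
      simp only [mem_filter, mem_univ, true_and, mem_erase, Finset.ssubset_iff_subset_ne]
      tauto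
    have hmemT : T ∈ univ.filter (fun T' : Finset (Fin n) => T ⊆ T') := by
      rw [mem_filter]; exact ⟨mem_univ _, le_rfl⟩
    rw [hfe, Finset.sum_erase_eq_sub hmemT]
    have hexp0 : T.card - 1 - T.card = 0 := by omega
    rw [hexp0, pow_zero, mul_one]
    rw [sum_superset_reindex T (fun T' => δ T' * 2 ^ (T'.card - 1 - T.card))]
    have key : ∀ U ∈ Tᶜ.powerset,
        (2:ℤ) * (δ (T ∪ U) * 2 ^ ((T ∪ U).card - 1 - T.card))
        = ((2:ℤ)^U.card - (if U = Tᶜ then (2:ℤ)^U.card else 0))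
          + (if U = (∅ : Finset (Fin n)) then δ T else 0) := by
      intro U hU
      rw [mem_powerset] at hU
      have hdisj : Disjoint T U := disjoint_compl_right.mono_right hU
      have hcardU : (T ∪ U).card = T.card + U.card := card_union_of_disjoint hdisj
      have hδval : δ (T ∪ U) = 1 - (if U = Tᶜ then 1 else 0) := by
        by_cases hc : U = Tᶜ
        · rw [if_pos hc, hc, union_compl, hδ2]; ring
        · rw [if_neg hc]
          have hne0 : (T ∪ U) ≠ univ := by
            intro hcc
            refine hc (Subset.antisymm hU fun a ha => ?_)
            have h3 : a ∈ T ∪ U := hcc ▸ mem_univ a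
            rw [mem_compl] at ha
            rcases mem_union.mp h3 with h4 | h4
            · exact absurd h4 ha
            · exact h4
          rw [hδ1 _ (hT.mono subset_union_left) hne0]; ring
      by_cases hU0 : U = ∅
      · subst hU0
        rw [if_pos rfl, union_empty, hexp0, pow_zero]
        have hc : (∅ : Finset (Fin n)) = Tᶜ ↔ T = univ := by
          constructor
          · intro hcc
            have := congrArg compl hcc
            simpa using this.symm
          · intro hcc; rw [hcc]; simp
        by_cases ht : T = univ
        · rw [if_pos (hc.mpr ht), ht, hδ2]; simp
        · rw [if_neg (fun hcc => ht (hc.mp hcc)), hδ1 T hT ht]; simp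
      · rw [if_neg hU0]
        have hu1 : 1 ≤ U.card := Finset.card_pos.mpr (nonempty_iff_ne_empty.mpr hU0)
        have hexp : (T ∪ U).card - 1 - T.card = U.card - 1 := by
          rw [hcardU]; omega
        rw [hexp, hδval]
        have hp : (2:ℤ) * 2 ^ (U.card - 1) = 2 ^ U.card := by
          rw [← pow_succ']; congr 1; omega
        by_cases hc : U = Tᶜ
        · rw [if_pos hc, if_pos hc]
          linear_combination (1 - (1:ℤ)) * hp
        · rw [if_neg hc, if_neg hc]
          linear_combination hp
    rw [mul_sub, Finset.mul_sum, Finset.sum_congr rfl key]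
    rw [Finset.sum_add_distrib, Finset.sum_sub_distrib]
    rw [sum_pow_two_card]
    rw [Finset.sum_ite_eq' Tᶜ.powerset Tᶜ (fun U => (2:ℤ)^U.card),
      if_pos (mem_powerset_self _)]
    rw [Finset.sum_ite_eq' Tᶜ.powerset (∅ : Finset (Fin n)) (fun _ => δ T),
      if_pos (empty_mem_powerset _)]
    have hcardc : Tᶜ.card = n - T.card := by
      rw [Finset.card_compl, Fintype.card_fin]
    rw [hcardc]
    by_cases ht : T = univ
    · have : n - T.card = 0 := by rw [ht, hcard_univ]; omega
      rw [this, ht, hδ2, Gv]; simp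
    · have htc : T.card < n := by
        have := Finset.card_lt_card (Finset.ssubset_univ_iff.mpr ht)
        rwa [hcard_univ] at this
      rw [hδ1 T hT ht, Gv, if_neg (by omega)]
      ring
  -- Step 3: formula for h
  have hform : ∀ T : Finset (Fin n), T.Nonempty →
      2 * h T = Gv n - Gv (n - T.card) := by
    intro T hT
    rw [hh T hT, mul_sub, hA, hB T hT]
  -- Step 4: formula for 2 * r
  have hrval : ∀ T : Finset (Fin n), T.Nonempty →
      2 * r T = Gv n - 3 - Gv (n - T.card) + (-1:ℤ)^T.card
        - (if T = univ then 2 else 0) := by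
    intro T hT
    have h2h := hform T hT
    by_cases hc : T = univ
    · subst hc
      rw [hruniv, hhb _ hT, if_pos rfl, hcard_univ]
      rw [hcard_univ] at h2h
      have hGv0 : Gv (n - n) = 0 := by simp [Gv]
      rw [hGv0, hev.neg_one_pow]
      rw [hGv0] at h2h
      linarith
    · rw [hr T hc, if_neg hc]
      by_cases hp : Even T.card
      · rw [if_pos hp, hhb _ hT, hp.neg_one_pow]
        linarith
      · rw [if_neg hp, hlb _ hT, hδ1 T hT hc,
          (Nat.not_even_iff_odd.mp hp).neg_one_pow]
        linarith
  -- Step 5: reindexed formula for 2 * x S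
  have hxS : ∀ S : Finset (Fin n), S.Nonempty →
      2 * x S = ∑ U ∈ S.powerset, (-1:ℤ)^(U.card+1) * (2 * r (univ \ S ∪ U)) := by
    intro S hS
    rw [hx S]
    rw [sum_superset_reindex (univ \ S)
      (fun T => (-1 : ℤ) ^ (T.card + S.card + n + 1) * r T)]
    have hcompl : (univ \ S)ᶜ = S := by
      rw [compl_eq_univ_sdiff]
      exact Finset.sdiff_sdiff_eq_self (subset_univ S)
    rw [hcompl, Finset.mul_sum]
    refine Finset.sum_congr rfl fun U hU => ?_
    rw [mem_powerset] at hU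
    have hsc : S.card ≤ n := by
      simpa using card_le_univ S
    have hUc : U.card ≤ S.card := card_le_card hU
    have hdisj : Disjoint (univ \ S) U := disjoint_of_subset_right hU sdiff_disjoint
    have hcard : (univ \ S ∪ U).card = (n - S.card) + U.card := by
      rw [card_union_of_disjoint hdisj, card_sdiff_of_subset (subset_univ S), hcard_univ]
    rw [hcard]
    have hsign : ((-1:ℤ))^((n - S.card + U.card) + S.card + n + 1) = (-1)^(U.card+1) :=
      neg_one_pow_congr_mod (by omega)
    rw [hsign]; ring
  -- Step 6: main sum evaluation for general S
  have hmain : ∀ S : Finset (Fin n), S.Nonempty →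
      ∑ U ∈ S.powerset,
        (-1:ℤ)^(U.card+1) * (Gv n - 3 - Gv (S.card - U.card) + (-1)^(S.card + U.card))
      = 2^S.card - 1 + (-1:ℤ)^S.card - (-1)^S.card * 2^S.card := by
    intro S hS
    rw [Finset.sum_powerset_apply_card
      (fun k => (-1:ℤ)^(k+1) * (Gv n - 3 - Gv (S.card - k) + (-1)^(S.card+k)))]
    exact main_sum n S.card hS.card_pos
  -- Step 7: value of 2 * x S for S proper nonempty
  have hval : ∀ S : Finset (Fin n), S.Nonempty → S ≠ univ →
      2 * x S = (2^S.card - 1 + (-1:ℤ)^S.card - (-1)^S.card * 2^S.card)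
        + 2*(-1:ℤ)^S.card := by
    intro S hS hSuniv
    rw [hxS S hS]
    have key : ∀ U ∈ S.powerset, (-1:ℤ)^(U.card+1) * (2 * r (univ \ S ∪ U))
        = (-1:ℤ)^(U.card+1) * (Gv n - 3 - Gv (S.card - U.card) + (-1)^(S.card + U.card))
          + (if U = S then 2*(-1:ℤ)^S.card else 0) := by
      intro U hU
      rw [mem_powerset] at hU
      have hUc : U.card ≤ S.card := card_le_card hU
      have hsc : S.card ≤ n := by
        simpa using card_le_univ S
      have hCne : (univ \ S).Nonempty := by
        rw [sdiff_nonempty]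
        intro hc
        exact hSuniv (univ_subset_iff.mp hc)
      have hne : (univ \ S ∪ U).Nonempty := hCne.mono subset_union_left
      have hdisj : Disjoint (univ \ S) U := disjoint_of_subset_right hU sdiff_disjoint
      have hcard : (univ \ S ∪ U).card = (n - S.card) + U.card := by
        rw [card_union_of_disjoint hdisj, card_sdiff_of_subset (subset_univ S), hcard_univ]
      have hiff : (univ \ S ∪ U) = univ ↔ U = S := by
        constructor
        · intro hE
          refine Subset.antisymm hU fun a ha => ?_
          have h3 : a ∈ univ \ S ∪ U := by rw [hE]; exact mem_univ a
          rcases mem_union.mp h3 with h4 | h4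
          · exact absurd ha (mem_sdiff.mp h4).2
          · exact h4
        · intro hE; rw [hE]; exact sdiff_union_of_subset (subset_univ S)
      rw [hrval _ hne, hcard]
      have h1 : n - ((n - S.card) + U.card) = S.card - U.card := by omega
      have h2 : ((-1:ℤ))^((n - S.card) + U.card) = (-1)^(S.card + U.card) :=
        neg_one_pow_congr_mod (by omega)
      rw [h1, h2]
      by_cases hUS : U = S
      · subst hUS
        rw [if_pos (hiff.mpr rfl), if_pos rfl, pow_succ]
        ring
      · rw [if_neg (fun hc => hUS (hiff.mp hc)), if_neg hUS]
        ring
    rw [Finset.sum_congr rfl key, Finset.sum_add_distrib, hmain S hS,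
      Finset.sum_ite_eq' S.powerset S (fun _ => 2*(-1:ℤ)^S.card),
      if_pos (mem_powerset_self S)]
  -- Step 8: x univ = 0
  have hxuniv : x univ = 0 := by
    have hmu : ∑ U ∈ (univ : Finset (Fin n)).powerset,
        (-1:ℤ)^(U.card+1) * (Gv n - 3 - Gv (n - U.card) + (-1)^(n + U.card)) = 0 := by
      rw [Finset.sum_powerset_apply_card
        (fun k => (-1:ℤ)^(k+1) * (Gv n - 3 - Gv (n - k) + (-1)^(n+k)))]
      rw [hcard_univ]
      have hm : ∑ m ∈ range (n+1),
          n.choose m • ((-1:ℤ)^(m+1) * (Gv n - 3 - Gv (n-m) + (-1)^(n+m)))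
          = 2^n - 1 + (-1:ℤ)^n - (-1)^n * 2^n := main_sum n n (by omega)
      rw [hm, hev.neg_one_pow]
      ring
    have key : ∀ U ∈ (univ : Finset (Fin n)).powerset,
        (-1:ℤ)^(U.card+1) * (2 * r (univ \ univ ∪ U))
        = (-1:ℤ)^(U.card+1) * (Gv n - 3 - Gv (n - U.card) + (-1)^(n + U.card))
          + (if U = univ then 2*(-1:ℤ)^n else 0)
          + (if U = (∅ : Finset (Fin n)) then (-2:ℤ) else 0) := by
      intro U hU
      rw [mem_powerset] at hU
      rw [Finset.sdiff_self, empty_union]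
      by_cases hU0 : U = ∅
      · subst hU0
        have hr0 : r ∅ = 0 := by
          rw [hr ∅ (fun hc => huniv_ne.ne_empty hc.symm)]
          simp [hb0]
        rw [hr0, if_neg (fun hc => huniv_ne.ne_empty hc.symm), if_pos rfl]
        simp only [card_empty, Nat.sub_zero, Nat.add_zero, hev.neg_one_pow]
        ring
      · have hUne : U.Nonempty := nonempty_iff_ne_empty.mpr hU0
        rw [hrval U hUne, if_neg hU0]
        have h2 : ((-1:ℤ))^(U.card) = (-1)^(n + U.card) :=
          neg_one_pow_congr_mod (by omega)
        rw [h2]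
        by_cases hUu : U = univ
        · subst hUu
          rw [if_pos rfl, if_pos rfl, hcard_univ, pow_succ]
          ring
        · rw [if_neg hUu, if_neg hUu]
          ring
    have h2x := hxS univ huniv_ne
    rw [Finset.sum_congr rfl key] at h2x
    rw [Finset.sum_add_distrib, Finset.sum_add_distrib, hmu] at h2x
    rw [Finset.sum_ite_eq' (univ : Finset (Fin n)).powerset univ
      (fun _ => 2*(-1:ℤ)^n), if_pos (mem_powerset_self _)] at h2x
    rw [Finset.sum_ite_eq' (univ : Finset (Fin n)).powerset (∅ : Finset (Fin n))
      (fun _ => (-2:ℤ)), if_pos (empty_mem_powerset _)] at h2x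
    rw [hev.neg_one_pow] at h2x
    linarith
  refine ⟨hxuniv, ?_, ?_⟩
  · intro S hS hSuniv hevS
    have hv := hval S hS hSuniv
    rw [hevS.neg_one_pow] at hv
    linarith
  · intro S hS hodd
    by_cases hSuniv : S = univ
    · subst hSuniv; rw [hxuniv]
    · have hv := hval S hS hSuniv
      rw [(Nat.not_even_iff_odd.mp hodd).neg_one_pow] at hv
      have hs1 : 1 ≤ S.card := hS.card_pos
      have hp : (2:ℤ)^1 ≤ 2^S.card := pow_le_pow_right₀ (by norm_num) hs1
      norm_num at hp
      linarith
end
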